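/- For all real α, β, γ the outer critical point x = √(α² + β² + γ²) of the degree-8 symmetric Arnold potential satisfies V(√(α² + β² + γ²)) = −α⁸ − 2·α⁴·β²·γ² + (1/3)·β⁸ − (2/3)·β²·γ⁶ − (8/3)·α⁶·β² − (4/3)·α⁶·γ² − 2·α⁴·β⁴ + (2/3)·β⁶·γ² − (1/3)·γ⁸ and V″(√(α² + β² + γ²)) = 16·β⁴·γ² + 16·α²·β²·γ² + 32·β²·γ⁴ + 16·γ⁶ + 16·α²·γ⁴; moreover if γ > 0 then V″(√(α² + β² + γ²)) > 0 and V has a local minimum at √(α² + β² + γ²). Here √ denotes the real square root. -/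

import Mathlib

/-- at the outer critical point `x = √(α² + β² + γ²)` of the
symmetric degree-8 Arnold potential, the value and second derivative of `V`
take the stated closed forms; moreover if `γ > 0` then the second derivative
is positive and `V` has a local minimum there. -/
theorem stmt18 (α β γ a c f : ℝ)
    (ha : a = -4 * α ^ 2 - (8 / 3) * β ^ 2 - (4 / 3) * γ ^ 2)
    (hc : c = 6 * α ^ 4 + 8 * α ^ 2 * β ^ 2 + 4 * α ^ 2 * γ ^ 2 +
      2 * β ^ 4 + 2 * β ^ 2 * γ ^ 2)
    (hf : f = -4 * α ^ 6 - 8 * α ^ 4 * β ^ 2 - 4 * α ^ 4 * γ ^ 2 -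
      4 * α ^ 2 * β ^ 4 - 4 * α ^ 2 * β ^ 2 * γ ^ 2)
    (V : ℝ → ℝ)
    (hV : ∀ x, V x = x ^ 8 + a * x ^ 6 + c * x ^ 4 + f * x ^ 2) :
    V (Real.sqrt (α ^ 2 + β ^ 2 + γ ^ 2)) =
      -α ^ 8 - 2 * α ^ 4 * β ^ 2 * γ ^ 2 + (1 / 3) * β ^ 8 -
      (2 / 3) * β ^ 2 * γ ^ 6 - (8 / 3) * α ^ 6 * β ^ 2 -
      (4 / 3) * α ^ 6 * γ ^ 2 - 2 * α ^ 4 * β ^ 4 +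
      (2 / 3) * β ^ 6 * γ ^ 2 - (1 / 3) * γ ^ 8 ∧
    deriv (deriv V) (Real.sqrt (α ^ 2 + β ^ 2 + γ ^ 2)) =
      16 * β ^ 4 * γ ^ 2 + 16 * α ^ 2 * β ^ 2 * γ ^ 2 + 32 * β ^ 2 * γ ^ 4 +
      16 * γ ^ 6 + 16 * α ^ 2 * γ ^ 4 ∧
    (0 < γ → 0 < deriv (deriv V) (Real.sqrt (α ^ 2 + β ^ 2 + γ ^ 2)) ∧
      IsLocalMin V (Real.sqrt (α ^ 2 + β ^ 2 + γ ^ 2))) := by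
  have hVfun : V = fun x => x ^ 8 + a * x ^ 6 + c * x ^ 4 + f * x ^ 2 := funext hV
  subst hVfun
  have hS : (0:ℝ) ≤ α ^ 2 + β ^ 2 + γ ^ 2 := by positivity
  set t := Real.sqrt (α ^ 2 + β ^ 2 + γ ^ 2) with ht
  have h2 : t ^ 2 = α ^ 2 + β ^ 2 + γ ^ 2 := Real.sq_sqrt hS
  have h4 : t ^ 4 = (α ^ 2 + β ^ 2 + γ ^ 2) ^ 2 := by
    rw [show t ^ 4 = (t ^ 2) ^ 2 by ring, h2]
  have h6 : t ^ 6 = (α ^ 2 + β ^ 2 + γ ^ 2) ^ 3 := by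
    rw [show t ^ 6 = (t ^ 2) ^ 3 by ring, h2]
  have h8 : t ^ 8 = (α ^ 2 + β ^ 2 + γ ^ 2) ^ 4 := by
    rw [show t ^ 8 = (t ^ 2) ^ 4 by ring, h2]
  -- derivative computations
  have key : ∀ x : ℝ, HasDerivAt (fun x : ℝ => x ^ 8 + a * x ^ 6 + c * x ^ 4 + f * x ^ 2)
      (8 * x ^ 7 + 6 * a * x ^ 5 + 4 * c * x ^ 3 + 2 * f * x) x := by
    intro x
    have h : HasDerivAt (fun x : ℝ => x ^ 8 + a * x ^ 6 + c * x ^ 4 + f * x ^ 2) _ x := (((hasDerivAt_pow 8 x).add ((hasDerivAt_pow 6 x).const_mul a)).add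
      ((hasDerivAt_pow 4 x).const_mul c)).add ((hasDerivAt_pow 2 x).const_mul f)
    convert h using 1
    push_cast
    ring
  have hd1 : deriv (fun x : ℝ => x ^ 8 + a * x ^ 6 + c * x ^ 4 + f * x ^ 2)
      = fun x => 8 * x ^ 7 + 6 * a * x ^ 5 + 4 * c * x ^ 3 + 2 * f * x :=
    funext fun x => (key x).deriv
  have key2 : ∀ x : ℝ, HasDerivAt (fun x : ℝ => 8 * x ^ 7 + 6 * a * x ^ 5 + 4 * c * x ^ 3 + 2 * f * x)
      (56 * x ^ 6 + 30 * a * x ^ 4 + 12 * c * x ^ 2 + 2 * f) x := by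
    intro x
    have h : HasDerivAt (fun x : ℝ => 8 * x ^ 7 + 6 * a * x ^ 5 + 4 * c * x ^ 3 + 2 * f * x) _ x := ((((hasDerivAt_pow 7 x).const_mul 8).add
      ((hasDerivAt_pow 5 x).const_mul (6 * a))).add
      ((hasDerivAt_pow 3 x).const_mul (4 * c))).add ((hasDerivAt_id x).const_mul (2 * f))
    convert h using 1
    push_cast
    ring
  have hd2 : deriv (deriv (fun x : ℝ => x ^ 8 + a * x ^ 6 + c * x ^ 4 + f * x ^ 2)) t
      = 56 * t ^ 6 + 30 * a * t ^ 4 + 12 * c * t ^ 2 + 2 * f := by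
    rw [hd1]; exact (key2 t).deriv
  have hd2v : deriv (deriv (fun x : ℝ => x ^ 8 + a * x ^ 6 + c * x ^ 4 + f * x ^ 2)) t
      = 16 * β ^ 4 * γ ^ 2 + 16 * α ^ 2 * β ^ 2 * γ ^ 2 + 32 * β ^ 2 * γ ^ 4 +
        16 * γ ^ 6 + 16 * α ^ 2 * γ ^ 4 := by
    rw [hd2, h6, h4, h2, ha, hc, hf]; ring
  refine ⟨?_, hd2v, ?_⟩
  · show t ^ 8 + a * t ^ 6 + c * t ^ 4 + f * t ^ 2 = _
    rw [h8, h6, h4, h2, ha, hc, hf]; ring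
  · intro hγ
    refine ⟨hd2v ▸ by positivity, ?_⟩
    -- first-derivative test on (√(α²+β²), t) and (t, t+1)
    have hab : (0:ℝ) ≤ α ^ 2 + β ^ 2 := by positivity
    have hlt : Real.sqrt (α ^ 2 + β ^ 2) < t := by
      rw [ht]
      exact Real.sqrt_lt_sqrt hab (by nlinarith)
    have htpos : 0 < t := lt_of_le_of_lt (Real.sqrt_nonneg _) hlt
    have hfac : ∀ x : ℝ, 8 * x ^ 7 + 6 * a * x ^ 5 + 4 * c * x ^ 3 + 2 * f * x
        = 8 * x * (x ^ 2 - α ^ 2) * (x ^ 2 - α ^ 2 - β ^ 2) * (x ^ 2 - (α ^ 2 + β ^ 2 + γ ^ 2)) := by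
      intro x; rw [ha, hc, hf]; ring
    refine isLocalMin_of_deriv_Ioo hlt (lt_add_one t) (by fun_prop)
      (fun x _ => ((key x).differentiableAt).differentiableWithinAt)
      (fun x _ => ((key x).differentiableAt).differentiableWithinAt) ?_ ?_
    · intro x hx
      rw [hd1]
      show 8 * x ^ 7 + 6 * a * x ^ 5 + 4 * c * x ^ 3 + 2 * f * x ≤ 0
      have hx1 : Real.sqrt (α ^ 2 + β ^ 2) < x := hx.1
      have hxpos : 0 < x := lt_of_le_of_lt (Real.sqrt_nonneg _) hx1
      have hx2 : α ^ 2 + β ^ 2 < x ^ 2 := (Real.sqrt_lt' hxpos).mp hx1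
      have hx3 : x ^ 2 < α ^ 2 + β ^ 2 + γ ^ 2 := by
        calc x ^ 2 < t ^ 2 := by
              exact pow_lt_pow_left₀ hx.2 hxpos.le (by norm_num)
          _ = _ := h2
      rw [hfac]
      have ea : (0:ℝ) ≤ x ^ 2 - α ^ 2 := by linarith [sq_nonneg β]
      have eb : (0:ℝ) ≤ x ^ 2 - α ^ 2 - β ^ 2 := by linarith
      have e1 : (0:ℝ) ≤ 8 * x * (x ^ 2 - α ^ 2) * (x ^ 2 - α ^ 2 - β ^ 2) :=
        mul_nonneg (mul_nonneg (by linarith) ea) eb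
      exact mul_nonpos_of_nonneg_of_nonpos e1 (by linarith)
    · intro x hx
      rw [hd1]
      show 0 ≤ 8 * x ^ 7 + 6 * a * x ^ 5 + 4 * c * x ^ 3 + 2 * f * x
      rw [hfac]
      have hxgt : t < x := hx.1
      have hxpos : 0 < x := htpos.trans hxgt
      have hx2 : α ^ 2 + β ^ 2 + γ ^ 2 < x ^ 2 := by
        calc α ^ 2 + β ^ 2 + γ ^ 2 = t ^ 2 := h2.symm
          _ < x ^ 2 := pow_lt_pow_left₀ hxgt htpos.le (by norm_num)
      have ea : (0:ℝ) ≤ x ^ 2 - α ^ 2 := by linarith [sq_nonneg β, sq_nonneg γ]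
      have eb : (0:ℝ) ≤ x ^ 2 - α ^ 2 - β ^ 2 := by linarith [sq_nonneg γ]
      have e1 : (0:ℝ) ≤ 8 * x * (x ^ 2 - α ^ 2) * (x ^ 2 - α ^ 2 - β ^ 2) :=
        mul_nonneg (mul_nonneg (by linarith) ea) eb
      exact mul_nonneg e1 (by linarith)
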